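/- Let p > 3 and c be distinct odd primes with c·p ≡ 1 (mod 4). In the ring ℤ[√−cp] (Mathlib's Zsqrtd (−c·p)), the ideals I generated by {2, √−cp − 1} and J generated by {(cp+1)/2, √−cp − 1} lie in the same ideal class: there exist nonzero elements α, β of ℤ[√−cp] such that (α)·I = (β)·J, where (α) denotes the principal ideal generated by α. -/

import Mathlib

lemma span_singleton_mul_span_pair {R : Type*} [CommRing R] (x a b : R) :
    Ideal.span ({x} : Set R) * Ideal.span ({a, b} : Set R) =
      Ideal.span ({x * a, x * b} : Set R) := by
  rw [show ({a, b} : Set R) = insert a {b} from rfl, Ideal.span_insert, Ideal.mul_sup,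
    Ideal.span_singleton_mul_span_singleton, Ideal.span_singleton_mul_span_singleton,
    ← Ideal.span_insert]

theorem span_two_sqrtd_sub_one_ideal_class (p c : ℕ) (hp : p.Prime) (hp3 : 3 < p)
    (hc : c.Prime) (hcodd : c ≠ 2) (hpc : p ≠ c) (hcp : c * p % 4 = 1) :
    ∃ α β : Zsqrtd (-((c : ℤ) * (p : ℤ))), α ≠ 0 ∧ β ≠ 0 ∧
      Ideal.span ({α} : Set (Zsqrtd (-((c : ℤ) * (p : ℤ))))) *
        Ideal.span ({2, Zsqrtd.sqrtd - 1} : Set (Zsqrtd (-((c : ℤ) * (p : ℤ))))) =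
      Ideal.span ({β} : Set (Zsqrtd (-((c : ℤ) * (p : ℤ))))) *
        Ideal.span ({((((c : ℤ) * (p : ℤ) + 1) / 2 : ℤ) : Zsqrtd (-((c : ℤ) * (p : ℤ)))),
          Zsqrtd.sqrtd - 1} : Set (Zsqrtd (-((c : ℤ) * (p : ℤ))))) := by
  set d : ℤ := -((c : ℤ) * (p : ℤ)) with hd
  set R := Zsqrtd d
  set M : ℤ := ((c : ℤ) * (p : ℤ) + 1) / 2 with hM
  have h1 : ((c * p : ℕ) : ℤ) % 4 = 1 := by exact_mod_cast congrArg (Nat.cast : ℕ → ℤ) hcp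
  push_cast at h1
  have h2m : (c : ℤ) * (p : ℤ) = 2 * M - 1 := by omega
  set s : R := Zsqrtd.sqrtd - 1 with hs
  have hss : s * s = -(2 * (M : R)) + -(2 * s) := by
    have h := Zsqrtd.dmuld (d := d)
    calc s * s = Zsqrtd.sqrtd * Zsqrtd.sqrtd - 2 * Zsqrtd.sqrtd + 1 := by rw [hs]; ring
    _ = (d : R) - 2 * Zsqrtd.sqrtd + 1 := by rw [h]
    _ = -(2 * (M : R)) + -(2 * s) := by
        have hdM : ((d : ℤ) : R) = ((1 - 2 * M : ℤ) : R) := by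
          norm_cast; simp only [hd]; omega
        rw [hs, hdM, Int.cast_sub, Int.cast_mul, Int.cast_one, Int.cast_ofNat]; ring
  refine ⟨s, 2, ?_, ?_, ?_⟩
  · intro h
    have : s.re = -1 := by
      rw [hs, Zsqrtd.re_sub, Zsqrtd.re_sqrtd, Zsqrtd.re_one]; ring
    rw [h] at this
    simp at this
  · intro h
    have : ((2 : R).re : ℤ) = 0 := by rw [h]; rfl
    simp at this
  · rw [span_singleton_mul_span_pair, span_singleton_mul_span_pair]
    have key : Ideal.span ({s * 2, s * s} : Set R) = Ideal.span ({2 * (M : R), 2 * s} : Set R) := by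
      apply le_antisymm <;> rw [Ideal.span_le] <;> intro x hx <;>
        simp only [Set.mem_insert_iff, Set.mem_singleton_iff] at hx
      · rcases hx with rfl | rfl
        · exact Ideal.subset_span (by simp [mul_comm])
        · rw [hss]
          exact Ideal.add_mem _
            (neg_mem (Ideal.subset_span (by simp)))
            (neg_mem (Ideal.subset_span (by simp)))
      · rcases hx with rfl | rfl
        · have : (2 : R) * (M : R) = -(s * s) + -(s * 2) := by rw [hss]; ring
          rw [this]
          exact Ideal.add_mem _
            (neg_mem (Ideal.subset_span (by simp)))
            (neg_mem (Ideal.subset_span (by simp)))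
        · exact Ideal.subset_span (Set.mem_insert_iff.mpr (Or.inl (mul_comm 2 s)))
    rw [key]
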